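/- Let φ: ℝ → ℝ be twice differentiable with φ'' Lipschitz with constant C_L > 0, let X₁,…,X_n ∈ ℝ^p, and let β, β₀ ∈ ℝ^p with Δ = β − β₀. Define υ = ∫₀¹ [ (1/n)Σ_{i=1}^n φ''(X_iᵀ(β₀ + tΔ)) X_i X_iᵀ − (1/n)Σ_{i=1}^n φ''(X_iᵀβ) X_i X_iᵀ ] Δ dt ∈ ℝ^p. Then ‖υ‖_∞ ≤ C_L · (max_{i,j} |X_{ij}|) · (1/n)Σ_{i=1}^n (X_iᵀΔ)². -/
import Mathlib


open scoped BigOperators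

/-- Sup-norm bound on the Taylor remainder of the gradient of the empirical
GLM loss.  With `Δ = β − β₀` and
`υ = ∫₀¹ [ (1/n)Σᵢ φ''(Xᵢᵀ(β₀ + tΔ))XᵢXᵢᵀ − (1/n)Σᵢ φ''(Xᵢᵀβ)XᵢXᵢᵀ ] Δ dt`,
one has `‖υ‖_∞ ≤ C_L · (maxᵢⱼ |Xᵢⱼ|) · (1/n)Σᵢ (XᵢᵀΔ)²`. -/
theorem sup_norm_taylor_remainder_gradient_bound
    (n p : ℕ) (hn : 0 < n)
    (φ'' : ℝ → ℝ) (CL : ℝ) (hCL : 0 < CL)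
    (hLip : ∀ u v : ℝ, |φ'' u - φ'' v| ≤ CL * |u - v|)
    (X : Fin n → Fin p → ℝ) (β β₀ : Fin p → ℝ) :
    ‖(fun j : Fin p => ∫ t in (0:ℝ)..1, ∑ k,
        (((n : ℝ)⁻¹ * ∑ i, φ'' (∑ l, X i l * (β₀ l + t * (β l - β₀ l))) * X i j * X i k)
          - ((n : ℝ)⁻¹ * ∑ i, φ'' (∑ l, X i l * β l) * X i j * X i k))
        * (β k - β₀ k))‖ ≤
      CL * (⨆ i : Fin n, ⨆ j : Fin p, |X i j|) *
        ((n : ℝ)⁻¹ * ∑ i, (∑ l, X i l * (β l - β₀ l)) ^ 2) := by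
  set s : Fin n → ℝ := fun i => ∑ l, X i l * (β l - β₀ l) with hs
  set M : ℝ := (⨆ i : Fin n, ⨆ j : Fin p, |X i j|) with hM
  have hM0 : 0 ≤ M := Real.iSup_nonneg fun i => Real.iSup_nonneg fun j => abs_nonneg _
  have hXle : ∀ i j, |X i j| ≤ M := by
    intro i j
    have h1 : |X i j| ≤ ⨆ j' : Fin p, |X i j'| :=
      le_ciSup (Set.Finite.bddAbove (Set.finite_range fun j' : Fin p => |X i j'|)) j
    have h2 : (⨆ j' : Fin p, |X i j'|) ≤ M :=
      le_ciSup (Set.Finite.bddAbove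
        (Set.finite_range fun i' : Fin n => ⨆ j' : Fin p, |X i' j'|)) i
    exact h1.trans h2
  have hC0 : 0 ≤ CL * M * ((n:ℝ)⁻¹ * ∑ i, (s i)^2) := by positivity
  rw [pi_norm_le_iff_of_nonneg hC0]
  intro j
  rw [Real.norm_eq_abs]
  have key : ∀ t ∈ Set.uIoc (0:ℝ) 1,
      ‖∑ k, (((n : ℝ)⁻¹ * ∑ i, φ'' (∑ l, X i l * (β₀ l + t * (β l - β₀ l))) * X i j * X i k)
          - ((n : ℝ)⁻¹ * ∑ i, φ'' (∑ l, X i l * β l) * X i j * X i k))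
        * (β k - β₀ k)‖ ≤ CL * M * ((n:ℝ)⁻¹ * ∑ i, (s i)^2) := by
    intro t ht
    rw [Set.uIoc_of_le (by norm_num : (0:ℝ) ≤ 1)] at ht
    set c : Fin n → ℝ := fun i => φ'' (∑ l, X i l * (β₀ l + t * (β l - β₀ l))) with hc
    set d : Fin n → ℝ := fun i => φ'' (∑ l, X i l * β l) with hd
    have heq : (∑ k, (((n : ℝ)⁻¹ * ∑ i, c i * X i j * X i k)
          - ((n : ℝ)⁻¹ * ∑ i, d i * X i j * X i k)) * (β k - β₀ k))
        = (n:ℝ)⁻¹ * ∑ i, (c i - d i) * X i j * s i := by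
      have step : ∀ k, (((n : ℝ)⁻¹ * ∑ i, c i * X i j * X i k)
            - ((n : ℝ)⁻¹ * ∑ i, d i * X i j * X i k)) * (β k - β₀ k)
          = ∑ i, (n:ℝ)⁻¹ * ((c i - d i) * X i j * (X i k * (β k - β₀ k))) := by
        intro k
        rw [← mul_sub, ← Finset.sum_sub_distrib, Finset.mul_sum, Finset.sum_mul]
        exact Finset.sum_congr rfl fun i _ => by ring
      rw [Finset.sum_congr rfl fun k _ => step k, Finset.sum_comm, Finset.mul_sum]
      refine Finset.sum_congr rfl fun i _ => ?_
      rw [← Finset.mul_sum, ← Finset.mul_sum]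
    rw [heq, Real.norm_eq_abs]
    have hbound : ∀ i : Fin n, |(c i - d i) * X i j * s i| ≤ CL * M * (s i)^2 := by
      intro i
      have hdiff : |c i - d i| ≤ CL * |s i| := by
        have harg : (∑ l, X i l * (β₀ l + t * (β l - β₀ l))) - (∑ l, X i l * β l)
            = (t - 1) * s i := by
          rw [← Finset.sum_sub_distrib, hs, Finset.mul_sum]
          exact Finset.sum_congr rfl fun l _ => by ring
        calc |c i - d i| ≤ CL * |(∑ l, X i l * (β₀ l + t * (β l - β₀ l)))
              - (∑ l, X i l * β l)| := hLip _ _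
          _ = CL * (|t - 1| * |s i|) := by rw [harg, abs_mul]
          _ ≤ CL * (1 * |s i|) := by
              have : |t - 1| ≤ 1 := by
                rw [abs_le]; constructor <;> linarith [ht.1, ht.2]
              exact mul_le_mul_of_nonneg_left
                (mul_le_mul_of_nonneg_right this (abs_nonneg _)) hCL.le
          _ = CL * |s i| := by ring
      calc |(c i - d i) * X i j * s i| = |c i - d i| * |X i j| * |s i| := by
            rw [abs_mul, abs_mul]
        _ ≤ (CL * |s i|) * M * |s i| := by
            apply mul_le_mul (mul_le_mul hdiff (hXle i j) (abs_nonneg _)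
              (by positivity)) le_rfl (abs_nonneg _) (by positivity)
        _ = CL * M * (|s i| * |s i|) := by ring
        _ = CL * M * (s i)^2 := by rw [← abs_mul, abs_mul_self, sq]
    calc |(n:ℝ)⁻¹ * ∑ i, (c i - d i) * X i j * s i|
        = (n:ℝ)⁻¹ * |∑ i, (c i - d i) * X i j * s i| := by
          rw [abs_mul, abs_of_nonneg (by positivity : (0:ℝ) ≤ (n:ℝ)⁻¹)]
      _ ≤ (n:ℝ)⁻¹ * ∑ i, |(c i - d i) * X i j * s i| := by
          gcongr; exact Finset.abs_sum_le_sum_abs _ _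
      _ ≤ (n:ℝ)⁻¹ * ∑ i, CL * M * (s i)^2 := by
          gcongr with i; exact hbound i
      _ = CL * M * ((n:ℝ)⁻¹ * ∑ i, (s i)^2) := by
          rw [← Finset.mul_sum]; ring
  calc |∫ t in (0:ℝ)..1, ∑ k, (((n : ℝ)⁻¹ * ∑ i, φ'' (∑ l, X i l * (β₀ l + t * (β l - β₀ l))) * X i j * X i k)
          - ((n : ℝ)⁻¹ * ∑ i, φ'' (∑ l, X i l * β l) * X i j * X i k))
        * (β k - β₀ k)|
      ≤ CL * M * ((n:ℝ)⁻¹ * ∑ i, (s i)^2) * |(1:ℝ) - 0| :=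
        intervalIntegral.norm_integral_le_of_norm_le_const key
    _ = CL * M * ((n:ℝ)⁻¹ * ∑ i, (s i)^2) := by norm_num
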